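/- Let χ_B be the Dirichlet character mod 4 with χ_B(even)=0, χ_B(4m±1)=±1. Then for all natural numbers n, k, χ_B(C(2n+1, 2k+1)) = (-1)^{n(k+1)} · χ_B(C(n, k)). -/

import Mathlib

/-- The nontrivial Dirichlet character mod 4, extended by 0 on even integers. -/
def chiB (x : ℤ) : ℤ :=
  if x % 2 = 0 then 0 else if x % 4 = 1 then 1 else -1

/-- Product of the first `m` odd numbers. -/
def oddProd (m : ℕ) : ℕ := ∏ i ∈ Finset.range m, (2*i+1)

lemma oddProd_succ (m : ℕ) : oddProd (m+1) = oddProd m * (2*m+1) :=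
  Finset.prod_range_succ _ _

lemma fact_even (m : ℕ) : (2*m).factorial = 2^m * m.factorial * oddProd m := by
  induction m with
  | zero => simp [oddProd]
  | succ m ih =>
    have h : 2*(m+1) = (2*m+1)+1 := by ring
    rw [h, Nat.factorial_succ, show 2*m+1 = (2*m)+1 from rfl, Nat.factorial_succ,
      ih, oddProd_succ, Nat.factorial_succ, pow_succ]
    ring

lemma fact_odd (m : ℕ) : (2*m+1).factorial = 2^m * m.factorial * oddProd (m+1) := by
  rw [show 2*m+1 = (2*m)+1 from rfl, Nat.factorial_succ, fact_even, oddProd_succ]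
  ring

lemma key {n k : ℕ} (h : k ≤ n) :
    (2*n+1).choose (2*k+1) * (oddProd (k+1) * oddProd (n-k)) =
      n.choose k * oddProd (n+1) := by
  apply Nat.eq_of_mul_eq_mul_left
    (show 0 < 2^n * k.factorial * (n-k).factorial by positivity)
  have h1 := Nat.choose_mul_factorial_mul_factorial (show 2*k+1 ≤ 2*n+1 by omega)
  have e : 2*n+1-(2*k+1) = 2*(n-k) := by omega
  rw [e, fact_even, fact_odd, fact_odd] at h1
  have h2 := Nat.choose_mul_factorial_mul_factorial h
  have hn : (2:ℕ)^n = 2^k * 2^(n-k) := by rw [← pow_add]; congr 1; omega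
  calc 2^n * k.factorial * (n-k).factorial *
        ((2*n+1).choose (2*k+1) * (oddProd (k+1) * oddProd (n-k)))
      = (2*n+1).choose (2*k+1) * (2^k * k.factorial * oddProd (k+1)) *
        (2^(n-k) * (n-k).factorial * oddProd (n-k)) := by rw [hn]; ring
    _ = 2^n * n.factorial * oddProd (n+1) := h1
    _ = oddProd (n+1) * 2^n * (n.choose k * k.factorial * (n-k).factorial) := by
        rw [h2]; ring
    _ = 2^n * k.factorial * (n-k).factorial * (n.choose k * oddProd (n+1)) := by ring

lemma chiB_emod (x : ℤ) : chiB x = chiB (x % 4) := by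
  unfold chiB
  rw [Int.emod_emod_of_dvd x (by norm_num : (2:ℤ) ∣ 4),
    Int.emod_emod_of_dvd x (dvd_refl 4)]

lemma chiB_mul (a b : ℤ) : chiB (a*b) = chiB a * chiB b := by
  rw [chiB_emod (a*b), chiB_emod a, chiB_emod b, Int.mul_emod, ← chiB_emod]
  have ha : a % 4 = 0 ∨ a % 4 = 1 ∨ a % 4 = 2 ∨ a % 4 = 3 := by omega
  have hb : b % 4 = 0 ∨ b % 4 = 1 ∨ b % 4 = 2 ∨ b % 4 = 3 := by omega
  rcases ha with h|h|h|h <;> rcases hb with h'|h'|h'|h' <;> rw [h, h'] <;> decide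

lemma neg_one_pow_congr_of_mod {x y : ℕ} (h : x % 2 = y % 2) : (-1:ℤ)^x = (-1)^y := by
  rcases Nat.even_or_odd x with hx|hx
  · rw [hx.neg_one_pow, Even.neg_one_pow (Nat.even_iff.2 (by
      rw [← h]; exact Nat.even_iff.1 hx))]
  · rw [hx.neg_one_pow, Odd.neg_one_pow (Nat.odd_iff.2 (by
      rw [← h]; exact Nat.odd_iff.1 hx))]

lemma chiB_two_mul_add_one (m : ℕ) : chiB (2*(m:ℤ)+1) = (-1)^m := by
  rw [chiB_emod]
  rcases Nat.even_or_odd m with ⟨a,rfl⟩|⟨a,rfl⟩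
  · push_cast
    rw [show (2*((a:ℤ)+a)+1) % 4 = 1 by omega, Even.neg_one_pow ⟨a, rfl⟩]; decide
  · push_cast
    rw [show (2*(2*(a:ℤ)+1)+1) % 4 = 3 by omega, Odd.neg_one_pow ⟨a, rfl⟩]; decide

lemma chiB_oddProd (m : ℕ) : chiB ((oddProd m : ℤ)) = (-1)^(m/2) := by
  induction m with
  | zero => simp [oddProd, chiB]
  | succ m ih =>
    rw [oddProd_succ]
    push_cast
    rw [chiB_mul, ih, chiB_two_mul_add_one, ← pow_add]
    exact neg_one_pow_congr_of_mod (by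
      rcases Nat.even_or_odd m with ⟨a,rfl⟩|⟨a,rfl⟩ <;> omega)

lemma parity_key {n k : ℕ} (h : k ≤ n) :
    ((n+1)/2 + ((k+1)/2 + (n-k)/2)) % 2 = (n*(k+1)) % 2 := by
  rw [Nat.mul_mod]
  have h2 : n % 2 = 0 ∨ n % 2 = 1 := by omega
  have h3 : (k+1) % 2 = 0 ∨ (k+1) % 2 = 1 := by omega
  rcases h2 with h2|h2 <;> rcases h3 with h3|h3 <;> rw [h2, h3] <;> omega

theorem chiB_choose_odd_odd (n k : ℕ) :
    chiB ((Nat.choose (2 * n + 1) (2 * k + 1) : ℤ)) =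
      (-1) ^ (n * (k + 1)) * chiB ((Nat.choose n k : ℤ)) := by
  rcases le_or_gt k n with h | h
  · have hkey := key h
    have hz : (((2*n+1).choose (2*k+1) : ℤ)) * ((oddProd (k+1) : ℤ) * (oddProd (n-k) : ℤ)) =
        ((n.choose k : ℤ)) * (oddProd (n+1) : ℤ) := by exact_mod_cast hkey
    have hEq := congrArg chiB hz
    rw [chiB_mul, chiB_mul, chiB_mul, chiB_oddProd, chiB_oddProd, chiB_oddProd] at hEq
    have hsq : ∀ e : ℕ, (-1:ℤ)^e * (-1)^e = 1 := fun e => by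
      rw [← pow_add]; exact Even.neg_one_pow ⟨e, rfl⟩
    have hp : (-1:ℤ)^((n+1)/2) * ((-1:ℤ)^((k+1)/2) * (-1:ℤ)^((n-k)/2)) = (-1)^(n*(k+1)) := by
      rw [← pow_add, ← pow_add]; exact neg_one_pow_congr_of_mod (parity_key h)
    set A := chiB (((2*n+1).choose (2*k+1) : ℤ)) with hA
    set B := chiB ((n.choose k : ℤ)) with hB
    have : A = (-1:ℤ)^(n*(k+1)) * B := by
      linear_combination ((-1:ℤ)^((k+1)/2) * (-1:ℤ)^((n-k)/2)) * hEq + B * hp -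
        A * ((-1:ℤ)^((n-k)/2) * (-1:ℤ)^((n-k)/2)) * (hsq ((k+1)/2)) - A * (hsq ((n-k)/2))
    exact this
  · rw [Nat.choose_eq_zero_of_lt (by omega), Nat.choose_eq_zero_of_lt h]
    simp [chiB]
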